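/- Every graph G satisfies ζ(G) ≤ 2·χ(G)·arb(G), where ζ is the strong arboricity, χ the chromatic number, and arb the arboricity. -/

import Mathlib

open SimpleGraph

/-- A walk is monochromatic under an edge coloring if all its edges get one color. -/
def Monochromatic {V α : Type*} {G : SimpleGraph V} {u v : V}
    (c : Sym2 V → α) (p : G.Walk u v) : Prop :=
  ∃ a, ∀ e ∈ p.edges, c e = a

/-- An edge coloring is strongly woody if no broken cycle (a path of length ≥ 2 whose
endpoints are adjacent, i.e. a cycle minus one edge) is monochromatic. -/
def StronglyWoody {V α : Type*} (G : SimpleGraph V) (c : Sym2 V → α) : Prop :=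
  ∀ ⦃u v : V⦄ (p : G.Walk u v), p.IsPath → 2 ≤ p.length → G.Adj u v →
    ¬ Monochromatic c p

/-- The strong arboricity: least number of colors in a strongly woody edge coloring. -/
noncomputable def strongArboricity {V : Type*} (G : SimpleGraph V) : ℕ :=
  sInf {k | ∃ c : Sym2 V → Fin k, StronglyWoody G c}

/-- An edge coloring is woody if no cycle is monochromatic (each color class is a forest). -/
def Woody {V α : Type*} (G : SimpleGraph V) (c : Sym2 V → α) : Prop :=
  ∀ ⦃u : V⦄ (p : G.Walk u u), p.IsCycle → ¬ Monochromatic c p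

/-- The arboricity: least number of colors in a woody edge coloring. -/
noncomputable def arboricity {V : Type*} (G : SimpleGraph V) : ℕ :=
  sInf {k | ∃ c : Sym2 V → Fin k, Woody G c}

/-- A proper vertex coloring. -/
def ProperColoring {V α : Type*} (G : SimpleGraph V) (f : V → α) : Prop :=
  ∀ ⦃u v : V⦄, G.Adj u v → f u ≠ f v

/-- An acyclic coloring: proper and no cycle uses at most two colors. -/
def AcyclicColoring {V α : Type*} (G : SimpleGraph V) (f : V → α) : Prop :=
  ProperColoring G f ∧
    ∀ ⦃u : V⦄ (p : G.Walk u u), p.IsCycle →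
      ¬ ∃ a b, ∀ x ∈ p.support, f x = a ∨ f x = b

/-- The acyclic chromatic number. -/
noncomputable def acyclicChromaticNumber {V : Type*} (G : SimpleGraph V) : ℕ :=
  sInf {k | ∃ f : V → Fin k, AcyclicColoring G f}

/-- The chromatic number (least number of colors in a proper vertex coloring). -/
noncomputable def chromNum {V : Type*} (G : SimpleGraph V) : ℕ :=
  sInf {k | ∃ f : V → Fin k, ProperColoring G f}

/-- A proper edge coloring: adjacent edges receive distinct colors. -/
def ProperEdgeColoring {V α : Type*} (G : SimpleGraph V) (c : Sym2 V → α) : Prop :=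
  ∀ ⦃u v w : V⦄, G.Adj u v → G.Adj v w → u ≠ w → c s(u, v) ≠ c s(v, w)

/-- The chromatic index: least number of colors in a proper edge coloring. -/
noncomputable def edgeChromNum {V : Type*} (G : SimpleGraph V) : ℕ :=
  sInf {k | ∃ c : Sym2 V → Fin k, ProperEdgeColoring G c}

/-- The 2-arboricity: least number of colors so that every cycle C receives at least
min{|C|, 3} colors. -/
noncomputable def arboricity2 {V : Type*} (G : SimpleGraph V) : ℕ :=
  sInf {k | ∃ c : Sym2 V → Fin k, ∀ ⦃u : V⦄ (p : G.Walk u u), p.IsCycle →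
    min p.length 3 ≤ (p.edges.map c).toFinset.card}

/-- `H` is a minor of `G`: there are disjoint nonempty connected branch sets in `G`,
one for each vertex of `H`, with an edge of `G` between the branch sets of any two
adjacent vertices of `H`. -/
def IsMinorOf {W V : Type*} (H : SimpleGraph W) (G : SimpleGraph V) : Prop :=
  ∃ φ : W → Set V,
    (∀ w, (φ w).Nonempty) ∧
    (∀ w, (G.induce (φ w)).Connected) ∧
    (Pairwise fun w w' => Disjoint (φ w) (φ w')) ∧
    (∀ ⦃w w'⦄, H.Adj w w' → ∃ a ∈ φ w, ∃ b ∈ φ w', G.Adj a b)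

/-- Wagner's characterization: planar = no K₅ minor and no K₃,₃ minor. -/
def Planar {V : Type*} (G : SimpleGraph V) : Prop :=
  ¬ IsMinorOf (completeGraph (Fin 5)) G ∧
    ¬ IsMinorOf (completeBipartiteGraph (Fin 3) (Fin 3)) G

/-- Outerplanar = no K₄ minor and no K₂,₃ minor. -/
def Outerplanar {V : Type*} (G : SimpleGraph V) : Prop :=
  ¬ IsMinorOf (completeGraph (Fin 4)) G ∧
    ¬ IsMinorOf (completeBipartiteGraph (Fin 2) (Fin 3)) G


namespace StrongArbAux

variable {V : Type*} {α : Type*}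

lemma dist_le_of_adj (H : SimpleGraph V) {u v r : V} (h : H.Adj u v) (hr : H.Reachable v r) :
    H.dist u r ≤ H.dist v r + 1 := by
  obtain ⟨p, _, hl⟩ := hr.exists_path_of_dist
  have := SimpleGraph.dist_le (SimpleGraph.Walk.cons h p)
  simpa [hl] using this

lemma mem_support_dist {H : SimpleGraph V} {v r x : V} {p : H.Walk v r}
    (hp : p.length = H.dist v r) (hmem : x ∈ p.support) (hne : x ≠ v) :
    H.dist x r < H.dist v r := by
  classical
  have hs := congrArg Walk.length (p.take_spec hmem)
  rw [Walk.length_append] at hs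
  have h1 := SimpleGraph.dist_le (p.dropUntil x hmem)
  have htu : (p.takeUntil x hmem).length ≠ 0 := fun h0 =>
    hne (Walk.eq_of_length_eq_zero h0).symm
  omega

lemma adj_dist_step {H : SimpleGraph V} (hac : H.IsAcyclic) {u v r : V} (h : H.Adj u v)
    (hru : H.Reachable u r) :
    H.dist v r = H.dist u r + 1 ∨ H.dist u r = H.dist v r + 1 := by
  have hrv : H.Reachable v r := (h.symm.reachable).trans hru
  have h1 : H.dist u r ≤ H.dist v r + 1 := dist_le_of_adj H h hrv
  have h2 : H.dist v r ≤ H.dist u r + 1 := dist_le_of_adj H h.symm hru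
  have hne : H.dist u r ≠ H.dist v r := by
    intro heq
    obtain ⟨p, hp, hl⟩ := hru.exists_path_of_dist
    obtain ⟨q, hq, hlq⟩ := hrv.exists_path_of_dist
    have hvns : v ∉ p.support := by
      intro hmem
      have := mem_support_dist hl hmem h.ne'
      omega
    have hpath : (Walk.cons h.symm p).IsPath := hp.cons hvns
    have heqp := hac.path_unique ⟨Walk.cons h.symm p, hpath⟩ ⟨q, hq⟩
    have hlen := congrArg (fun P : H.Path v r => P.val.length) heqp
    simp only [Walk.length_cons] at hlen
    omega
  omega

lemma unique_parent {H : SimpleGraph V} (hac : H.IsAcyclic) {x v w r : V}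
    (hv : H.Adj x v) (hw : H.Adj x w) (hvw : v ≠ w)
    (hrv : H.Reachable v r) (hrw : H.Reachable w r)
    (hdv : H.dist v r + 1 = H.dist x r) (hdw : H.dist w r + 1 = H.dist x r) : False := by
  obtain ⟨p, hp, hl⟩ := hrv.exists_path_of_dist
  obtain ⟨q, hq, hlq⟩ := hrw.exists_path_of_dist
  have hxp : x ∉ p.support := fun hm => by
    have := mem_support_dist hl hm hv.ne
    omega
  have hxq : x ∉ q.support := fun hm => by
    have := mem_support_dist hlq hm hw.ne
    omega
  have hP : (Walk.cons hv p).IsPath := hp.cons hxp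
  have hQ : (Walk.cons hw q).IsPath := hq.cons hxq
  have heqp := hac.path_unique ⟨_, hP⟩ ⟨_, hQ⟩
  have hval : (Walk.cons hv p) = (Walk.cons hw q) := congrArg Subtype.val heqp
  have hvw' : v = w := by
    have := congrArg (fun W : H.Walk x r => W.getVert 1) hval
    simpa [Walk.getVert_cons_succ] using this
  exact hvw hvw'

lemma forest_path3 {H : SimpleGraph V} (hac : H.IsAcyclic) (root : V → V)
    (hroot : ∀ u, H.Reachable u (root u)) (hradj : ∀ {u v}, H.Adj u v → root u = root v)
    {x0 x1 x2 x3 : V} (a01 : H.Adj x0 x1) (a12 : H.Adj x1 x2) (a23 : H.Adj x2 x3)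
    (h02 : x0 ≠ x2) (h13 : x1 ≠ x3)
    (hs1 : min (H.dist x0 (root x0)) (H.dist x1 (root x1)) % 2
         = min (H.dist x1 (root x1)) (H.dist x2 (root x2)) % 2)
    (hs2 : min (H.dist x1 (root x1)) (H.dist x2 (root x2)) % 2
         = min (H.dist x2 (root x2)) (H.dist x3 (root x3)) % 2) : False := by
  set r := root x0 with hr
  have e1 : root x1 = r := (hradj a01).symm
  have e2 : root x2 = r := by rw [← hradj a12, e1]
  have e3 : root x3 = r := by rw [← hradj a23, e2]
  rw [e1, e2] at hs1
  rw [e1, e2, e3] at hs2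
  have hr0 : H.Reachable x0 r := hroot x0
  have hr1 : H.Reachable x1 r := e1 ▸ hroot x1
  have hr2 : H.Reachable x2 r := e2 ▸ hroot x2
  obtain h1 | h1 := adj_dist_step hac a01 hr0
  · obtain h2 | h2 := adj_dist_step hac a12 hr1
    · omega
    · exact unique_parent hac a01.symm a12 h02 hr0 hr2 (by omega) (by omega)
  · obtain h2 | h2 := adj_dist_step hac a12 hr1
    · obtain h3 | h3 := adj_dist_step hac a23 hr2
      · omega
      · exact unique_parent hac a12.symm a23 h13 hr1 (e3 ▸ hroot x3) (by omega) (by omega)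
    · omega



def csub (G : SimpleGraph V) (c : Sym2 V → α) (i : α) : SimpleGraph V where
  Adj u v := G.Adj u v ∧ c s(u, v) = i
  symm := ⟨fun u v ⟨h, hc⟩ => ⟨h.symm, by rwa [Sym2.eq_swap]⟩⟩
  loopless := ⟨fun u ⟨h, _⟩ => G.irrefl h⟩

lemma csub_le (G : SimpleGraph V) (c : Sym2 V → α) (i : α) : csub G c i ≤ G :=
  fun _ _ h => h.1

lemma csub_edge {G : SimpleGraph V} {c : Sym2 V → α} {i : α} {e : Sym2 V}
    (he : e ∈ (csub G c i).edgeSet) : c e = i := by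
  induction e with
  | _ x y => exact he.2

lemma csub_acyclic {G : SimpleGraph V} {c : Sym2 V → α} (hw : Woody G c) (i : α) :
    (csub G c i).IsAcyclic := by
  intro v p hp
  have hc : (p.mapLe (csub_le G c i)).IsCycle := hp.mapLe _
  refine hw (p.mapLe _) hc ⟨i, fun e he => ?_⟩
  have hedges : (p.mapLe (csub_le G c i)).edges = p.edges := by
    simp only [Walk.mapLe, Walk.edges_map]
    refine List.map_congr_left (fun e _ => ?_) |>.trans (List.map_id _)
    exact congrFun (congrArg Sym2.map rfl) e |>.trans (by
      have : ⇑(Hom.ofLE (csub_le G c i)) = id := rfl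
      rw [this, Sym2.map_id, id])
  rw [hedges] at he
  exact csub_edge (p.edges_subset_edgeSet he)


lemma csub_adj {G : SimpleGraph V} {c : Sym2 V → α} {i : α} {u v : V} :
    (csub G c i).Adj u v ↔ G.Adj u v ∧ c s(u, v) = i := Iff.rfl
noncomputable def rootOf (G : SimpleGraph V) (c : Sym2 V → α) (i : α) (v : V) : V :=
  ((csub G c i).connectedComponentMk v).out

lemma reach_rootOf (G : SimpleGraph V) (c : Sym2 V → α) (i : α) (v : V) :
    (csub G c i).Reachable v (rootOf G c i v) := by
  have h : (csub G c i).connectedComponentMk (rootOf G c i v)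
      = (csub G c i).connectedComponentMk v := Quot.out_eq _
  exact (ConnectedComponent.eq.mp h).symm

lemma rootOf_adj {G : SimpleGraph V} {c : Sym2 V → α} {i : α} {u v : V}
    (h : (csub G c i).Adj u v) : rootOf G c i u = rootOf G c i v :=
  congrArg Quot.out (ConnectedComponent.sound h.reachable)

noncomputable def dd (G : SimpleGraph V) (c : Sym2 V → α) (i : α) (v : V) : ℕ :=
  (csub G c i).dist v (rootOf G c i v)

noncomputable def shadeN (G : SimpleGraph V) (c : Sym2 V → α) : Sym2 V → ℕ :=
  Sym2.lift ⟨fun u v => min (dd G c (c s(u, v)) u) (dd G c (c s(u, v)) v), by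
    intro u v
    have hsw : s(v, u) = s(u, v) := Sym2.eq_swap
    dsimp only
    rw [hsw]
    exact Nat.min_comm _ _⟩

noncomputable def shade (G : SimpleGraph V) (c : Sym2 V → α) (e : Sym2 V) : Fin 2 :=
  ⟨shadeN G c e % 2, Nat.mod_lt _ two_pos⟩

noncomputable def gsum {m : ℕ} [NeZero m] (f : V → Fin m) : Sym2 V → Fin m :=
  Sym2.lift ⟨fun u v => f u + f v, fun _ _ => add_comm _ _⟩

theorem combined_stronglyWoody (G : SimpleGraph V) {m a : ℕ} [NeZero m]
    (f : V → Fin m) (hf : ProperColoring G f) (c : Sym2 V → Fin a) (hc : Woody G c) :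
    StronglyWoody G (fun e => (gsum f e, c e, shade G c e)) := by
  intro u v p hp hlen hadj hmono
  obtain ⟨x, hx⟩ := hmono
  cases p with
  | nil => simp at hlen
  | cons h1 q =>
    rename_i b
    cases q with
    | nil => simp at hlen
    | cons h2 q2 =>
      rename_i w
      have he1 : s(u, b) ∈ (Walk.cons h1 (Walk.cons h2 q2)).edges := by simp
      have he2 : s(b, w) ∈ (Walk.cons h1 (Walk.cons h2 q2)).edges := by simp
      have hx12 := (hx _ he1).trans (hx _ he2).symm
      cases q2 with
      | nil =>
        -- triangle case: w = v
        have hg : gsum f s(u, b) = gsum f s(b, v) := congrArg Prod.fst hx12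
        have hsum : f u + f b = f b + f v := by simpa [gsum] using hg
        rw [add_comm (f b) (f v)] at hsum
        exact hf hadj (add_right_cancel hsum)
      | cons h3 q3 =>
        rename_i d
        have he3 : s(w, d) ∈ (Walk.cons h1 (Walk.cons h2 (Walk.cons h3 q3))).edges := by simp
        have hx13 := (hx _ he1).trans (hx _ he3).symm
        have hc2 : c s(b, w) = c s(u, b) := (congrArg (fun z => z.2.1) hx12).symm
        have hc3 : c s(w, d) = c s(u, b) := (congrArg (fun z => z.2.1) hx13).symm
        set i := c s(u, b) with hi
        have hs12 : shade G c s(u, b) = shade G c s(b, w) := congrArg (fun z => z.2.2) hx12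
        have hs13 : shade G c s(u, b) = shade G c s(w, d) := congrArg (fun z => z.2.2) hx13
        have A01 : (csub G c i).Adj u b := csub_adj.mpr ⟨h1, rfl⟩
        have A12 : (csub G c i).Adj b w := csub_adj.mpr ⟨h2, hc2⟩
        have A23 : (csub G c i).Adj w d := csub_adj.mpr ⟨h3, hc3⟩
        have hnd := hp.support_nodup
        simp only [Walk.support_cons, List.nodup_cons, List.mem_cons] at hnd
        have h02 : u ≠ w := fun h => hnd.1 (by tauto)
        have h13 : b ≠ d := fun h => hnd.2.1 (by
          subst h
          exact Or.inr q3.start_mem_support)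
        have hv1 : (shadeN G c s(u, b)) % 2 = (shadeN G c s(b, w)) % 2 :=
          congrArg Fin.val hs12
        have hv2 : (shadeN G c s(u, b)) % 2 = (shadeN G c s(w, d)) % 2 :=
          congrArg Fin.val hs13
        simp only [shadeN, Sym2.lift_mk, hc2, hc3, ← hi] at hv1 hv2
        exact forest_path3 (csub_acyclic hc i) (rootOf G c i)
          (reach_rootOf G c i) (fun h => rootOf_adj h) A01 A12 A23 h02 h13
          hv1 (hv1.symm.trans hv2)


lemma stronglyWoody_comp {β γ : Type*} (G : SimpleGraph V) (c : Sym2 V → β) (h : β → γ)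
    (hinj : Function.Injective h) (hsw : StronglyWoody G c) :
    StronglyWoody G (fun e => h (c e)) := by
  intro u v p hp hl hadj hmono
  obtain ⟨x, hx⟩ := hmono
  refine hsw p hp hl hadj ?_
  have hne : p.edges ≠ [] := by
    have hl2 := p.length_edges
    intro h; rw [h] at hl2; simp at hl2; omega
  obtain ⟨e0, t, hE⟩ := List.exists_cons_of_ne_nil hne
  refine ⟨c e0, fun e he => hinj ?_⟩
  have h1 := hx e he
  have h2 := hx e0 (by rw [hE]; exact List.mem_cons_self)
  exact h1.trans h2.symm

lemma injective_woody {a : ℕ} {G : SimpleGraph V} {c : Sym2 V → Fin a}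
    (hinj : Function.Injective c) : Woody G c := by
  intro u p hcyc hmono
  obtain ⟨x, hx⟩ := hmono
  have h3 := hcyc.three_le_length
  have hlen : p.edges.length = p.length := p.length_edges
  have hne : p.edges ≠ [] := by
    intro h; rw [h] at hlen; simp at hlen; omega
  obtain ⟨e0, l1, hE⟩ := List.exists_cons_of_ne_nil hne
  have hne2 : l1 ≠ [] := by
    intro h; rw [hE, h] at hlen; simp at hlen; omega
  obtain ⟨e1, l2, hE2⟩ := List.exists_cons_of_ne_nil hne2
  have hnd := hcyc.edges_nodup
  rw [hE, hE2] at hnd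
  have h01 : e0 ≠ e1 := by
    intro h; rw [h] at hnd; exact (List.nodup_cons.mp hnd).1 (List.mem_cons_self)
  refine h01 (hinj ?_)
  rw [hx e0 (by rw [hE]; exact List.mem_cons_self),
    hx e1 (by rw [hE, hE2]; exact List.mem_cons_of_mem _ (List.mem_cons_self))]

end StrongArbAux

open StrongArbAux in

/-- Every graph satisfies ζ(G) ≤ 2 · χ(G) · arb(G). -/
theorem stmt8 {V : Type*} [Fintype V] (G : SimpleGraph V) :
    strongArboricity G ≤ 2 * chromNum G * arboricity G := by
  classical
  by_cases hV : Nonempty V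
  · obtain ⟨v0⟩ := hV
    have hSm : {k | ∃ f : V → Fin k, ProperColoring G f}.Nonempty :=
      ⟨Fintype.card V, Fintype.equivFin V,
        fun u v h heq => h.ne ((Fintype.equivFin V).injective heq)⟩
    have hfmem : chromNum G ∈ {k | ∃ f : V → Fin k, ProperColoring G f} := Nat.sInf_mem hSm
    obtain ⟨f, hf⟩ := hfmem
    have hSa : {k | ∃ c : Sym2 V → Fin k, Woody G c}.Nonempty :=
      ⟨Fintype.card (Sym2 V), Fintype.equivFin (Sym2 V),
        injective_woody (Fintype.equivFin (Sym2 V)).injective⟩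
    have hcmem : arboricity G ∈ {k | ∃ c : Sym2 V → Fin k, Woody G c} := Nat.sInf_mem hSa
    obtain ⟨c, hc⟩ := hcmem
    haveI : NeZero (chromNum G) := ⟨fun h => (h ▸ f v0).elim0⟩
    have hsw := combined_stronglyWoody G f hf c hc
    have hcard : Fintype.card (Fin (chromNum G) × Fin (arboricity G) × Fin 2)
        = 2 * chromNum G * arboricity G := by
      simp [Fintype.card_prod]
      ring
    let eqv := Fintype.equivFinOfCardEq hcard
    have hsw2 := stronglyWoody_comp G _ eqv eqv.injective hsw
    have hmem : 2 * chromNum G * arboricity G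
        ∈ {k | ∃ c' : Sym2 V → Fin k, StronglyWoody G c'} :=
      ⟨fun e => eqv (gsum f e, c e, shade G c e), hsw2⟩
    exact Nat.sInf_le hmem
  · haveI : IsEmpty V := not_nonempty_iff.mp hV
    have h0 : (0 : ℕ) ∈ {k | ∃ c : Sym2 V → Fin k, StronglyWoody G c} := by
      refine ⟨Sym2.lift ⟨fun u _ => isEmptyElim u, fun u _ => isEmptyElim u⟩, ?_⟩
      intro u v p
      exact (IsEmpty.false u).elim
    have h1 := Nat.sInf_le h0
    exact h1.trans (Nat.zero_le _)
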